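/- Let (α_t, β_t)_{t≥0} be a GDGA sequence with step size η ∈ (0, min{1, μ/(4σ)}), and assume the global error bound with constant τ > 0. Then for every t ≥ 0, ‖α_t − proj_{Ω*}(α_t)‖ ≤ (τ/η)‖α_t − α_{t+1}‖ + τ√σ ε̂. -/

import Mathlib

open scoped RealInnerProductSpace
open Matrix

/-- The largest eigenvalue of the positive semidefinite matrix `D * Dᵀ`, realized as the
operator norm of the associated Euclidean linear map. -/
noncomputable def sigmaMax {m d : ℕ} (D : Matrix (Fin m) (Fin d) ℝ) : ℝ :=
  ‖Matrix.toEuclideanCLM (𝕜 := ℝ) (D * Dᵀ)‖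

/-- The ℓ∞-ball of radius `lam` in `ℝ^m`. -/
def BinfBall (m : ℕ) (lam : ℝ) : Set (EuclideanSpace ℝ (Fin m)) :=
  {a | ∀ i, |a i| ≤ lam}

/-- `p` is the Euclidean projection of `x` onto `C`. -/
def IsProjOn {E : Type*} [NormedAddCommGroup E] (C : Set E) (x p : E) : Prop :=
  p ∈ C ∧ ∀ q ∈ C, ‖x - p‖ ≤ ‖x - q‖

section Aux

variable {m : ℕ}

/-- Coordinatewise clamping to `[-lam, lam]`, the Euclidean projection onto the `ℓ∞` ball. -/
noncomputable def clampB (lam : ℝ) (x : EuclideanSpace ℝ (Fin m)) : EuclideanSpace ℝ (Fin m) :=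
  WithLp.toLp 2 (fun i => max (-lam) (min lam (x i)))

lemma clamp_sq (lam t q : ℝ) (hq : |q| ≤ lam) :
    (t - max (-lam) (min lam t)) ^ 2 ≤ (t - q) ^ 2 := by
  have hl : 0 ≤ lam := (abs_nonneg q).trans hq
  rw [abs_le] at hq
  rcases le_total t (-lam) with h1 | h1
  · rw [min_eq_right (by linarith), max_eq_left h1]
    nlinarith
  · rcases le_total lam t with h2 | h2
    · rw [min_eq_left h2, max_eq_right (by linarith)]
      nlinarith
    · rw [min_eq_right h2, max_eq_right h1]
      nlinarith

lemma clampB_isProjOn (lam : ℝ) (hl : 0 ≤ lam) (x : EuclideanSpace ℝ (Fin m)) :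
    IsProjOn (BinfBall m lam) x (clampB lam x) := by
  constructor
  · intro i
    rw [abs_le]
    refine ⟨le_max_left _ _, max_le (by linarith) ((min_le_left _ _))⟩
  · intro q hq
    rw [EuclideanSpace.norm_eq, EuclideanSpace.norm_eq]
    apply Real.sqrt_le_sqrt
    apply Finset.sum_le_sum
    intro i _
    simp only [PiLp.sub_apply, Real.norm_eq_abs, sq_abs]
    exact clamp_sq lam (x i) (q i) (hq i)

lemma binf_convex (lam : ℝ) : Convex ℝ (BinfBall m lam) := by
  intro x hx y hy a b ha hb hab
  intro i
  have h1 := hx i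
  have h2 := hy i
  have : (a • x + b • y) i = a * x i + b * y i := by
    simp [PiLp.add_apply, PiLp.smul_apply, smul_eq_mul]
  rw [this]
  calc |a * x i + b * y i| ≤ |a * x i| + |b * y i| := abs_add_le _ _
    _ = a * |x i| + b * |y i| := by rw [abs_mul, abs_mul, abs_of_nonneg ha, abs_of_nonneg hb]
    _ ≤ a * lam + b * lam := by
        gcongr
    _ = lam := by rw [← add_mul, hab, one_mul]

lemma isProjOn_inner_le {C : Set (EuclideanSpace ℝ (Fin m))} (hC : Convex ℝ C)
    {x p : EuclideanSpace ℝ (Fin m)} (h : IsProjOn C x p) :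
    ∀ q ∈ C, ⟪x - p, q - p⟫ ≤ 0 := by
  have hbdd : BddBelow (Set.range fun w : C => ‖x - (w : EuclideanSpace ℝ (Fin m))‖) := by
    refine ⟨0, ?_⟩
    rintro r ⟨w, rfl⟩
    exact norm_nonneg _
  haveI : Nonempty C := ⟨⟨p, h.1⟩⟩
  have hmin : ‖x - p‖ = ⨅ w : C, ‖x - (w : EuclideanSpace ℝ (Fin m))‖ :=
    le_antisymm (le_ciInf fun w => h.2 w w.2) (ciInf_le hbdd ⟨p, h.1⟩)
  exact (norm_eq_iInf_iff_real_inner_le_zero hC h.1).mp hmin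

lemma proj_nonexpansive {C : Set (EuclideanSpace ℝ (Fin m))} (hC : Convex ℝ C)
    {x y p q : EuclideanSpace ℝ (Fin m)}
    (hp : IsProjOn C x p) (hq : IsProjOn C y q) : ‖p - q‖ ≤ ‖x - y‖ := by
  have h1 := isProjOn_inner_le hC hp q hq.1
  have h2 := isProjOn_inner_le hC hq p hp.1
  have h1' : 0 ≤ ⟪x - p, p - q⟫ := by
    have e : ⟪x - p, p - q⟫ = -⟪x - p, q - p⟫ := by
      rw [← inner_neg_right]
      congr 1
      abel
    rw [e]; linarith
  have h2' : ⟪y - q, p - q⟫ ≤ 0 := h2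
  have key : ⟪p - q, p - q⟫ ≤ ⟪x - y, p - q⟫ := by
    have e1 : ⟪x - y, p - q⟫ - ⟪p - q, p - q⟫ = ⟪x - p, p - q⟫ - ⟪y - q, p - q⟫ := by
      rw [← inner_sub_left, ← inner_sub_left]
      congr 1
      abel
    linarith
  have h3 : ⟪p - q, p - q⟫ = ‖p - q‖ ^ 2 := real_inner_self_eq_norm_sq _
  have h4 := real_inner_le_norm (x - y) (p - q)
  nlinarith [norm_nonneg (p - q), norm_nonneg (x - y)]

lemma proj_scale {C : Set (EuclideanSpace ℝ (Fin m))} (hC : Convex ℝ C)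
    {x g ps pt : EuclideanSpace ℝ (Fin m)} {s t : ℝ} (hs : 0 < s) (hst : s ≤ t)
    (hps : IsProjOn C (x - s • g) ps) (hpt : IsProjOn C (x - t • g) pt) :
    s * ‖x - pt‖ ≤ t * ‖x - ps‖ := by
  have ht : 0 < t := lt_of_lt_of_le hs hst
  have h1 := isProjOn_inner_le hC hps pt hpt.1
  have h2 := isProjOn_inner_le hC hpt ps hps.1
  have h1' : ⟪x - ps, pt - ps⟫ ≤ s * ⟪g, pt - ps⟫ := by
    have e : x - s • g - ps = (x - ps) - s • g := by abel
    rw [e, inner_sub_left, real_inner_smul_left] at h1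
    linarith
  have h2' : t * ⟪g, pt - ps⟫ ≤ ⟪x - pt, pt - ps⟫ := by
    have e : x - t • g - pt = (x - pt) - t • g := by abel
    have e2 : ps - pt = -(pt - ps) := by abel
    rw [e, e2, inner_neg_right, inner_sub_left, real_inner_smul_left] at h2
    linarith
  have chain : t * ⟪x - ps, pt - ps⟫ ≤ s * ⟪x - pt, pt - ps⟫ := by
    calc t * ⟪x - ps, pt - ps⟫ ≤ t * (s * ⟪g, pt - ps⟫) :=
          mul_le_mul_of_nonneg_left h1' ht.le
      _ = s * (t * ⟪g, pt - ps⟫) := by ring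
      _ ≤ s * ⟪x - pt, pt - ps⟫ := mul_le_mul_of_nonneg_left h2' hs.le
  have ew : pt - ps = (x - ps) - (x - pt) := by abel
  have ex1 : ⟪x - ps, pt - ps⟫ = ‖x - ps‖ ^ 2 - ⟪x - ps, x - pt⟫ := by
    rw [ew, inner_sub_right, real_inner_self_eq_norm_sq]
  have ex2 : ⟪x - pt, pt - ps⟫ = ⟪x - ps, x - pt⟫ - ‖x - pt‖ ^ 2 := by
    rw [ew, inner_sub_right, real_inner_self_eq_norm_sq, real_inner_comm]
  set A := ‖x - ps‖ with hA
  set B := ‖x - pt‖ with hB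
  set c := ⟪x - ps, x - pt⟫ with hc
  rw [ex1, ex2] at chain
  have hcab : c ≤ A * B := real_inner_le_norm _ _
  have hA0 : 0 ≤ A := norm_nonneg _
  have hB0 : 0 ≤ B := norm_nonneg _
  have K : t * A ^ 2 + s * B ^ 2 ≤ (s + t) * (A * B) := by nlinarith
  by_contra hcon
  push_neg at hcon
  have hAB : A < B := by nlinarith
  nlinarith [mul_pos (show (0:ℝ) < B - A by linarith)
    (show (0:ℝ) < s * B - t * A by nlinarith)]

end Aux

section MatrixAux

variable {m d : ℕ} (D : Matrix (Fin m) (Fin d) ℝ)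

lemma inner_toEuclideanLin_swap (a : EuclideanSpace ℝ (Fin m)) (b : EuclideanSpace ℝ (Fin d)) :
    ⟪a, Matrix.toEuclideanLin (𝕜 := ℝ) D b⟫ = ⟪Matrix.toEuclideanLin (𝕜 := ℝ) Dᵀ a, b⟫ := by
  rw [show (Dᵀ) = Dᴴ from (Matrix.conjTranspose_eq_transpose_of_trivial D).symm,
    Matrix.toEuclideanLin_conjTranspose_eq_adjoint, LinearMap.adjoint_inner_left]

lemma toEuclideanLin_matrix_mul {k : ℕ} (A : Matrix (Fin m) (Fin d) ℝ)
    (B : Matrix (Fin d) (Fin k) ℝ) :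
    Matrix.toEuclideanLin (𝕜 := ℝ) (A * B) =
      (Matrix.toEuclideanLin (𝕜 := ℝ) A).comp (Matrix.toEuclideanLin (𝕜 := ℝ) B) := by
  apply LinearMap.ext
  intro v
  simp [Matrix.toEuclideanLin_apply, Matrix.mulVec_mulVec]

lemma toEuclideanLin_norm_le (v : EuclideanSpace ℝ (Fin d)) :
    ‖Matrix.toEuclideanLin (𝕜 := ℝ) D v‖ ≤ Real.sqrt (sigmaMax D) * ‖v‖ := by
  set S : EuclideanSpace ℝ (Fin m) →L[ℝ] EuclideanSpace ℝ (Fin d) :=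
    LinearMap.toContinuousLinearMap (Matrix.toEuclideanLin (𝕜 := ℝ) Dᵀ) with hS
  have hadj : (ContinuousLinearMap.adjoint S : EuclideanSpace ℝ (Fin d) →ₗ[ℝ]
      EuclideanSpace ℝ (Fin m)) = Matrix.toEuclideanLin (𝕜 := ℝ) D := by
    rw [hS, ← LinearMap.adjoint_eq_toCLM_adjoint, ← Matrix.toEuclideanLin_conjTranspose_eq_adjoint,
      Matrix.conjTranspose_eq_transpose_of_trivial, Matrix.transpose_transpose]
  have hCLM : Matrix.toEuclideanCLM (𝕜 := ℝ) (D * Dᵀ) = (ContinuousLinearMap.adjoint S) ∘L S := by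
    apply ContinuousLinearMap.coe_injective
    rw [Matrix.coe_toEuclideanCLM_eq_toEuclideanLin, ContinuousLinearMap.toLinearMap_comp, hadj,
      toEuclideanLin_matrix_mul, hS, LinearMap.coe_toContinuousLinearMap]
  have hσ : sigmaMax D = ‖S‖ * ‖S‖ := by
    rw [sigmaMax, hCLM, ContinuousLinearMap.norm_adjoint_comp_self]
  have hsqrt : Real.sqrt (sigmaMax D) = ‖S‖ := by
    rw [hσ, Real.sqrt_mul_self (norm_nonneg _)]
  have hv : Matrix.toEuclideanLin (𝕜 := ℝ) D v = (ContinuousLinearMap.adjoint S) v := by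
    rw [← hadj]; rfl
  rw [hv, hsqrt]
  calc ‖(ContinuousLinearMap.adjoint S) v‖ ≤ ‖ContinuousLinearMap.adjoint S‖ * ‖v‖ :=
        ContinuousLinearMap.le_opNorm _ _
    _ = ‖S‖ * ‖v‖ := by rw [LinearIsometryEquiv.norm_map]

end MatrixAux

/-- for a GDGA sequence with step size `η ∈ (0, min{1, μ/(4σ)})`, under the
global error bound with constant `τ > 0`, for every `t`,
`‖α_t − proj_{Ω*}(α_t)‖ ≤ (τ/η)‖α_t − α_{t+1}‖ + τ√σ ε̂`. -/
theorem gdga_distance_to_optimal_set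
    (d m : ℕ) (hd : 0 < d) (hm : 0 < m)
    (f : EuclideanSpace ℝ (Fin d) → ℝ)
    (f' : EuclideanSpace ℝ (Fin d) → EuclideanSpace ℝ (Fin d))
    (μ ℓ : ℝ) (hμ : 0 < μ) (hμℓ : μ ≤ ℓ)
    (hconv : ConvexOn ℝ Set.univ f)
    (hgrad : ∀ x, HasGradientAt f (f' x) x)
    (hsc : ∀ β₁ β₂ : EuclideanSpace ℝ (Fin d),
      μ * ‖β₁ - β₂‖ ^ 2 ≤ ⟪f' β₁ - f' β₂, β₁ - β₂⟫)
    (hlip : ∀ β₁ β₂ : EuclideanSpace ℝ (Fin d),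
      ‖f' β₁ - f' β₂‖ ≤ ℓ * ‖β₁ - β₂‖)
    (D : Matrix (Fin m) (Fin d) ℝ) (lam : ℝ) (hlam : 0 < lam)
    (fstar : EuclideanSpace ℝ (Fin d) → ℝ)
    (hfstar : ∀ x, IsLUB (Set.range fun β => ⟪x, β⟫ - f β) (fstar x))
    (fbar : EuclideanSpace ℝ (Fin m) → ℝ)
    (hfbar : ∀ a, fbar a = fstar (Matrix.toEuclideanLin (𝕜 := ℝ) Dᵀ a))
    (fbar' : EuclideanSpace ℝ (Fin m) → EuclideanSpace ℝ (Fin m))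
    (hfbar' : ∀ a, HasGradientAt fbar (fbar' a) a)
    (Ω : Set (EuclideanSpace ℝ (Fin m)))
    (hΩ : Ω = {a | a ∈ BinfBall m lam ∧ ∀ a' ∈ BinfBall m lam, fbar a ≤ fbar a'})
    (βs : EuclideanSpace ℝ (Fin m) → EuclideanSpace ℝ (Fin d))
    (hβs : ∀ a β, f (βs a) - ⟪a, Matrix.toEuclideanLin (𝕜 := ℝ) D (βs a)⟫ ≤
        f β - ⟪a, Matrix.toEuclideanLin (𝕜 := ℝ) D β⟫)
    (τ : ℝ) (hτ : 0 < τ)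
    (herr : ∀ a ∈ BinfBall m lam, ∀ pΩ, IsProjOn Ω a pΩ →
      ∀ pB, IsProjOn (BinfBall m lam) (a - fbar' a) pB → ‖a - pΩ‖ ≤ τ * ‖a - pB‖)
    (epsh : ℝ) (hepsh : 0 ≤ epsh)
    (η : ℝ) (hη : 0 < η) (hη1 : η < 1) (hη' : η < μ / (4 * sigmaMax D))
    (α : ℕ → EuclideanSpace ℝ (Fin m)) (β : ℕ → EuclideanSpace ℝ (Fin d))
    (hαmem : ∀ t, α t ∈ BinfBall m lam)
    (hβ : ∀ t, ‖β t - βs (α t)‖ ≤ epsh)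
    (hstep : ∀ t, IsProjOn (BinfBall m lam)
      (α t - η • Matrix.toEuclideanLin (𝕜 := ℝ) D (β t)) (α (t + 1))) :
    ∀ t : ℕ, ∀ p, IsProjOn Ω (α t) p →
      ‖α t - p‖ ≤ (τ / η) * ‖α t - α (t + 1)‖ + τ * Real.sqrt (sigmaMax D) * epsh := by
  intro t p hp
  set x := α t with hx
  set g : EuclideanSpace ℝ (Fin m) := Matrix.toEuclideanLin (𝕜 := ℝ) D (βs x) with hg
  -- value of `fbar` at `x`
  have hfa : fbar x = ⟪Matrix.toEuclideanLin (𝕜 := ℝ) Dᵀ x, βs x⟫ - f (βs x) := by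
    rw [hfbar]
    have hlub := hfstar (Matrix.toEuclideanLin (𝕜 := ℝ) Dᵀ x)
    apply le_antisymm
    · apply hlub.2
      rintro y ⟨b, rfl⟩
      have h := hβs x b
      rw [inner_toEuclideanLin_swap D x (βs x), inner_toEuclideanLin_swap D x b] at h
      simp only
      linarith
    · exact hlub.1 ⟨βs x, rfl⟩
  -- subgradient inequality for `fbar` at `x`
  have hsub : ∀ y, fbar x + ⟪g, y - x⟫ ≤ fbar y := by
    intro y
    have hlub := hfstar (Matrix.toEuclideanLin (𝕜 := ℝ) Dᵀ y)
    have h1 : ⟪Matrix.toEuclideanLin (𝕜 := ℝ) Dᵀ y, βs x⟫ - f (βs x) ≤ fbar y := by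
      rw [hfbar]
      exact hlub.1 ⟨βs x, rfl⟩
    have h2 : ⟪g, y - x⟫ =
        ⟪Matrix.toEuclideanLin (𝕜 := ℝ) Dᵀ y, βs x⟫ -
          ⟪Matrix.toEuclideanLin (𝕜 := ℝ) Dᵀ x, βs x⟫ := by
      rw [real_inner_comm, hg, inner_toEuclideanLin_swap D (y - x) (βs x), map_sub,
        inner_sub_left]
    linarith [hfa]
  -- the gradient of `fbar` at `x` is `g`
  have hgrad_eq : fbar' x = g := by
    have hmin : IsLocalMin (fun y => fbar y - ⟪g, y⟫) x := by
      apply Filter.Eventually.of_forall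
      intro y
      have h := hsub y
      rw [inner_sub_right] at h
      simp only
      linarith
    have hfd1 : HasFDerivAt fbar
        (InnerProductSpace.toDual ℝ (EuclideanSpace ℝ (Fin m)) (fbar' x)) x :=
      hasGradientAt_iff_hasFDerivAt.mp (hfbar' x)
    have hfd2 : HasFDerivAt (fun y => ⟪g, y⟫)
        (InnerProductSpace.toDual ℝ (EuclideanSpace ℝ (Fin m)) g) x := by
      have he : (fun y : EuclideanSpace ℝ (Fin m) => ⟪g, y⟫) =
          ⇑(InnerProductSpace.toDual ℝ (EuclideanSpace ℝ (Fin m)) g) := by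
        ext y
        simp [InnerProductSpace.toDual_apply_apply]
      rw [he]
      exact (InnerProductSpace.toDual ℝ (EuclideanSpace ℝ (Fin m)) g).hasFDerivAt
    have hψ : HasFDerivAt (fun y => fbar y - ⟪g, y⟫)
        (InnerProductSpace.toDual ℝ (EuclideanSpace ℝ (Fin m)) (fbar' x) -
          InnerProductSpace.toDual ℝ (EuclideanSpace ℝ (Fin m)) g) x := hfd1.sub hfd2
    have hz := hmin.hasFDerivAt_eq_zero hψ
    have hz2 : InnerProductSpace.toDual ℝ (EuclideanSpace ℝ (Fin m)) (fbar' x - g) =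
        InnerProductSpace.toDual ℝ (EuclideanSpace ℝ (Fin m)) 0 := by
      rw [map_sub, map_zero]
      exact hz
    have := (InnerProductSpace.toDual ℝ (EuclideanSpace ℝ (Fin m))).injective hz2
    rw [sub_eq_zero] at this
    exact this
  -- projections
  have hl : (0:ℝ) ≤ lam := hlam.le
  have hcvx : Convex ℝ (BinfBall m lam) := binf_convex lam
  set pB := clampB lam (x - g) with hpBdef
  have hpB : IsProjOn (BinfBall m lam) (x - g) pB := clampB_isProjOn lam hl _
  set u := clampB lam (x - η • g) with hudef
  have hpu : IsProjOn (BinfBall m lam) (x - η • g) u := clampB_isProjOn lam hl _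
  have hEB : ‖x - p‖ ≤ τ * ‖x - pB‖ := by
    refine herr x (hαmem t) p hp pB ?_
    rw [hgrad_eq]
    exact hpB
  have hpB1 : IsProjOn (BinfBall m lam) (x - (1:ℝ) • g) pB := by
    rw [one_smul]
    exact hpB
  have hScale : η * ‖x - pB‖ ≤ 1 * ‖x - u‖ := proj_scale hcvx hη hη1.le hpu hpB1
  have hNE : ‖α (t + 1) - u‖ ≤
      ‖(x - η • Matrix.toEuclideanLin (𝕜 := ℝ) D (β t)) - (x - η • g)‖ :=
    proj_nonexpansive hcvx (hstep t) hpu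
  have hdiff : (x - η • Matrix.toEuclideanLin (𝕜 := ℝ) D (β t)) - (x - η • g) =
      η • (Matrix.toEuclideanLin (𝕜 := ℝ) D (βs x - β t)) := by
    rw [map_sub, smul_sub, hg]
    abel
  have hDb : ‖Matrix.toEuclideanLin (𝕜 := ℝ) D (βs x - β t)‖ ≤
      Real.sqrt (sigmaMax D) * epsh := by
    calc ‖Matrix.toEuclideanLin (𝕜 := ℝ) D (βs x - β t)‖ ≤
          Real.sqrt (sigmaMax D) * ‖βs x - β t‖ := toEuclideanLin_norm_le D _
      _ ≤ Real.sqrt (sigmaMax D) * epsh := by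
          apply mul_le_mul_of_nonneg_left _ (Real.sqrt_nonneg _)
          rw [norm_sub_rev]
          exact hβ t
  have hNE2 : ‖α (t + 1) - u‖ ≤ η * (Real.sqrt (sigmaMax D) * epsh) := by
    calc ‖α (t + 1) - u‖ ≤
        ‖(x - η • Matrix.toEuclideanLin (𝕜 := ℝ) D (β t)) - (x - η • g)‖ := hNE
      _ = η * ‖Matrix.toEuclideanLin (𝕜 := ℝ) D (βs x - β t)‖ := by
          rw [hdiff, norm_smul, Real.norm_eq_abs, abs_of_pos hη]
      _ ≤ η * (Real.sqrt (sigmaMax D) * epsh) := mul_le_mul_of_nonneg_left hDb hη.le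
  have hTri : ‖x - u‖ ≤ ‖x - α (t + 1)‖ + ‖α (t + 1) - u‖ := by
    have e : x - u = (x - α (t + 1)) + (α (t + 1) - u) := by abel
    rw [e]
    exact norm_add_le _ _
  have hκ : (τ / η) * η = τ := div_mul_cancel₀ τ hη.ne'
  have hκ0 : 0 ≤ τ / η := div_nonneg hτ.le hη.le
  calc ‖x - p‖ ≤ τ * ‖x - pB‖ := hEB
    _ = (τ / η) * (η * ‖x - pB‖) := by rw [← mul_assoc, hκ]
    _ ≤ (τ / η) * (1 * ‖x - u‖) := mul_le_mul_of_nonneg_left hScale hκ0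
    _ = (τ / η) * ‖x - u‖ := by ring
    _ ≤ (τ / η) * (‖x - α (t + 1)‖ + η * (Real.sqrt (sigmaMax D) * epsh)) := by
        apply mul_le_mul_of_nonneg_left _ hκ0
        linarith
    _ = (τ / η) * ‖x - α (t + 1)‖ + ((τ / η) * η) * (Real.sqrt (sigmaMax D) * epsh) := by ring
    _ = (τ / η) * ‖x - α (t + 1)‖ + τ * Real.sqrt (sigmaMax D) * epsh := by rw [hκ]; ring
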